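/- Let Q be a finite acyclic quiver with full commutativity relations ρ forming a bound quiver presentation of the incidence algebra A of the poset (Q_0, ⪯), where x ⪯ y iff there is a path from x to y. If I is an interval (connected convex full subquiver) of Q and W is a quotient module of the interval module V_I, then W is interval decomposable, i.e., W is isomorphic to a finite direct sum of interval modules. -/

import Mathlib

set_option linter.unusedSectionVars false

open scoped Classical

/-- A persistence module over the poset `P`: a functor `P → Vect_k`.
(This models pointwise finite modules over the incidence algebra `A = kQ/ρ` of the poset.) -/
structure PersMod (k P : Type) [Field k] [PartialOrder P] where
  V : P → Type
  [acg : ∀ a, AddCommGroup (V a)]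
  [mod : ∀ a, Module k (V a)]
  map : ∀ {a b : P}, a ≤ b → (V a →ₗ[k] V b)
  map_id : ∀ a : P, map (le_refl a) = LinearMap.id
  map_comp : ∀ {a b c : P} (h₁ : a ≤ b) (h₂ : b ≤ c),
    (map h₂).comp (map h₁) = map (h₁.trans h₂)

attribute [instance] PersMod.acg PersMod.mod

variable {k P : Type} [Field k] [PartialOrder P]

/-- Morphisms of persistence modules, as a `k`-submodule of the product of Hom-spaces. -/
def PersHomSub (M N : PersMod k P) :
    Submodule k (∀ a : P, M.V a →ₗ[k] N.V a) where
  carrier := {f | ∀ ⦃a b : P⦄ (h : a ≤ b), (N.map h).comp (f a) = (f b).comp (M.map h)}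
  add_mem' := by
    intro f g hf hg a b h
    simp only [Pi.add_apply, LinearMap.comp_add, LinearMap.add_comp, hf h, hg h]
  zero_mem' := by intro a b h; simp
  smul_mem' := by
    intro c f hf a b h
    simp only [Pi.smul_apply, LinearMap.comp_smul, LinearMap.smul_comp, hf h]

/-- The space of morphisms `M → N` of persistence modules. -/
def PersHom (M N : PersMod k P) : Type := ↥(PersHomSub M N)

noncomputable instance (M N : PersMod k P) : AddCommGroup (PersHom M N) :=
  inferInstanceAs (AddCommGroup ↥(PersHomSub M N))
noncomputable instance (M N : PersMod k P) : Module k (PersHom M N) :=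
  inferInstanceAs (Module k ↥(PersHomSub M N))

/-- Composition of morphisms of persistence modules. -/
def PersHom.comp {M N O : PersMod k P} (g : PersHom N O) (f : PersHom M N) :
    PersHom M O :=
  ⟨fun a => (g.1 a).comp (f.1 a), by
    intro a b h
    rw [← LinearMap.comp_assoc, g.2 h, LinearMap.comp_assoc, f.2 h, LinearMap.comp_assoc]⟩

def IsMonoP {M N : PersMod k P} (f : PersHom M N) : Prop :=
  ∀ a : P, Function.Injective (f.1 a)

def IsEpiP {M N : PersMod k P} (f : PersHom M N) : Prop :=
  ∀ a : P, Function.Surjective (f.1 a)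

def IsIsoP {M N : PersMod k P} (f : PersHom M N) : Prop :=
  ∀ a : P, Function.Bijective (f.1 a)

/-- Convexity of a subset of the poset. -/
def IsConvexSet (I : Set P) : Prop :=
  ∀ ⦃a b c : P⦄, a ∈ I → c ∈ I → a ≤ b → b ≤ c → b ∈ I

/-- Zigzag-connectivity of a subset of the poset. -/
def IsConnectedSet (I : Set P) : Prop :=
  I.Nonempty ∧ ∀ a ∈ I, ∀ b ∈ I,
    Relation.ReflTransGen (fun x y => x ∈ I ∧ y ∈ I ∧ (x ≤ y ∨ y ≤ x)) a b

/-- An interval of the poset: a connected convex subset. -/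
def IsIntervalSet (I : Set P) : Prop := IsConvexSet I ∧ IsConnectedSet I

/-- The underlying linear map of the interval module. -/
noncomputable def intervalMap (I : Set P) (a b : P) :
    ↥(if a ∈ I then (⊤ : Submodule k k) else ⊥) →ₗ[k]
      ↥(if b ∈ I then (⊤ : Submodule k k) else ⊥) where
  toFun v := ⟨if a ∈ I ∧ b ∈ I then (v : k) else 0, by
    by_cases hb : b ∈ I
    · simp [hb]
    · have hab : ¬(a ∈ I ∧ b ∈ I) := fun h' => hb h'.2
      rw [if_neg hab, if_neg hb]; exact Submodule.zero_mem _⟩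
  map_add' v w := by
    apply Subtype.ext
    by_cases h' : a ∈ I ∧ b ∈ I <;> simp [h']
  map_smul' c v := by
    apply Subtype.ext
    by_cases h' : a ∈ I ∧ b ∈ I <;> simp [h']

@[simp] lemma intervalMap_coe (I : Set P) (a b : P)
    (v : ↥(if a ∈ I then (⊤ : Submodule k k) else ⊥)) :
    ((intervalMap I a b v : ↥(if b ∈ I then (⊤ : Submodule k k) else ⊥)) : k)
      = if a ∈ I ∧ b ∈ I then (v : k) else 0 := rfl

lemma intervalMem_zero {I : Set P} {a : P} (ha : a ∉ I)
    (v : ↥(if a ∈ I then (⊤ : Submodule k k) else ⊥)) : (v : k) = 0 := by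
  obtain ⟨x, hx⟩ := v
  rw [if_neg ha] at hx
  exact (Submodule.mem_bot k).mp hx

/-- The interval module `V_I` associated to a convex subset `I`. -/
noncomputable def intervalMod (I : Set P) (hI : IsConvexSet I) : PersMod k P where
  V a := ↥(if a ∈ I then (⊤ : Submodule k k) else ⊥)
  map {a b} _ := intervalMap I a b
  map_id a := by
    ext v
    rw [intervalMap_coe]
    by_cases ha : a ∈ I
    · simp [ha]
    · rw [if_neg (fun h' => ha h'.1)]; exact (intervalMem_zero ha (LinearMap.id v)).symm
  map_comp {a b c} h₁ h₂ := by
    ext v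
    rw [LinearMap.comp_apply, intervalMap_coe, intervalMap_coe, intervalMap_coe]
    by_cases ha : a ∈ I <;> by_cases hb : b ∈ I <;> by_cases hc : c ∈ I <;>
      first
        | (exact absurd (hI ha hc h₁ h₂) hb)
        | simp [ha, hb, hc]

/-- Finite direct sums of persistence modules. -/
noncomputable def dSum {ι : Type} (M : ι → PersMod k P) : PersMod k P where
  V a := ∀ i, (M i).V a
  map {a b} h := LinearMap.pi fun i => ((M i).map h).comp (LinearMap.proj i)
  map_id a := by
    refine LinearMap.ext fun v => ?_
    funext i
    simp [LinearMap.pi_apply, (M i).map_id]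
  map_comp {a b c} h₁ h₂ := by
    refine LinearMap.ext fun v => ?_
    funext i
    simpa [LinearMap.pi_apply] using LinearMap.congr_fun ((M i).map_comp h₁ h₂) (v i)

/-- A persistence module is interval decomposable if it is isomorphic to a finite
direct sum of interval modules. -/
def IntervalDecomposable (W : PersMod k P) : Prop :=
  ∃ (n : ℕ) (J : Fin n → Set P) (hJ : ∀ i, IsIntervalSet (J i))
    (e : PersHom W (dSum fun i => intervalMod (J i) (hJ i).1)), IsIsoP e

/-- The combined morphism `⊕ᵢ Mᵢ → N` of a finite family of morphisms `Mᵢ → N`. -/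
noncomputable def combineHom {ι : Type} [Fintype ι] {Mf : ι → PersMod k P}
    {N : PersMod k P} (f : ∀ i, PersHom (Mf i) N) : PersHom (dSum Mf) N :=
  ⟨fun a => ∑ i, ((f i).1 a).comp (LinearMap.proj i), by
    intro a b h
    refine LinearMap.ext fun v => ?_
    simp only [LinearMap.comp_apply, LinearMap.sum_apply, LinearMap.proj_apply, map_sum]
    refine Finset.sum_congr rfl fun i _ => ?_
    have := LinearMap.congr_fun ((f i).2 h) (v i)
    exact this⟩

namespace QIMAux

variable {k P : Type} [Field k] [PartialOrder P]

section Gen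

variable (I : Set P) (hI : IsConvexSet I)

noncomputable def gen (a : P) : (intervalMod (k := k) I hI).V a :=
  ⟨if a ∈ I then 1 else 0, by
    show (if a ∈ I then (1 : k) else 0) ∈ (if a ∈ I then (⊤ : Submodule k k) else ⊥)
    split_ifs with h; exacts [Submodule.mem_top, Submodule.zero_mem _]⟩

@[simp] lemma gen_coe (a : P) :
    (gen (k := k) I hI a).1 = if a ∈ I then 1 else 0 := rfl

lemma eq_smul_gen (a : P) (v : (intervalMod (k := k) I hI).V a) :
    v = v.1 • gen I hI a := by
  apply Subtype.ext
  show v.1 = (v.1 • gen I hI a).1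
  show v.1 = v.1 * (gen I hI a).1
  rw [gen_coe]
  by_cases h : a ∈ I
  · simp [h]
  · simpa [h] using intervalMem_zero h v

lemma map_gen {a b : P} (h : a ≤ b) (ha : a ∈ I) :
    (intervalMod (k := k) I hI).map h (gen I hI a) = gen I hI b := by
  apply Subtype.ext
  show ((intervalMap I a b (gen I hI a) :
    ↥(if b ∈ I then (⊤ : Submodule k k) else ⊥)) : k) = _
  refine (intervalMap_coe I a b _).trans ?_
  by_cases hb : b ∈ I <;> simp [gen, ha, hb]

variable (W : PersMod k P) (f : PersHom (intervalMod (k := k) I hI) W)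

noncomputable def wgen (a : P) : W.V a := f.1 a (gen I hI a)

def JsetF : Set P := {a | wgen I hI W f a ≠ 0}

lemma JsetF_sub : JsetF I hI W f ⊆ I := by
  intro a ha
  by_contra h
  apply ha
  show f.1 a (gen I hI a) = 0
  have : gen (k := k) I hI a = 0 := by
    apply Subtype.ext
    show (gen (k := k) I hI a).1 = 0
    rw [gen_coe, if_neg h]
  rw [this, map_zero]

lemma wmap {a b : P} (h : a ≤ b) (ha : a ∈ I) :
    W.map h (wgen I hI W f a) = wgen I hI W f b := by
  have := LinearMap.congr_fun (f.2 h) (gen I hI a)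
  simp only [LinearMap.comp_apply] at this
  rw [wgen, this, map_gen I hI h ha]
  rfl

lemma wspan (hf : IsEpiP f) (a : P) (x : W.V a) :
    ∃ c : k, x = c • wgen I hI W f a := by
  obtain ⟨v, hv⟩ := hf a x
  refine ⟨v.1, ?_⟩
  rw [← hv]
  conv_lhs => rw [eq_smul_gen I hI a v]
  rw [map_smul]
  rfl

lemma triv_outside (hf : IsEpiP f) {a : P} (ha : a ∉ JsetF I hI W f) (x : W.V a) :
    x = 0 := by
  obtain ⟨c, hc⟩ := wspan I hI W f hf a x
  have : wgen I hI W f a = 0 := by simpa [JsetF] using ha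
  rw [hc, this, smul_zero]

lemma JsetF_convex : IsConvexSet (JsetF I hI W f) := by
  intro a b c ha hc hab hbc
  have haI : a ∈ I := JsetF_sub I hI W f ha
  have hcI : c ∈ I := JsetF_sub I hI W f hc
  have hbI : b ∈ I := hI haI hcI hab hbc
  intro hb
  apply hc
  show wgen I hI W f c = 0
  rw [← wmap I hI W f hbc hbI, hb, map_zero]

noncomputable def coordFun (a : P) : W.V a →ₗ[k] k :=
  if hw : wgen I hI W f a ≠ 0 ∧ ∀ x : W.V a, ∃ c : k, x = c • wgen I hI W f a then
    (LinearEquiv.ofBijective (LinearMap.toSpanSingleton k _ (wgen I hI W f a))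
      ⟨smul_left_injective k hw.1, fun x => (hw.2 x).imp fun _c hc => hc.symm⟩).symm.toLinearMap
  else 0

lemma coordFun_spec (hf : IsEpiP f) {a : P} (ha : a ∈ JsetF I hI W f) (x : W.V a) :
    coordFun I hI W f a x • wgen I hI W f a = x := by
  have hw : wgen I hI W f a ≠ 0 ∧ ∀ x : W.V a, ∃ c : k, x = c • wgen I hI W f a :=
    ⟨ha, wspan I hI W f hf a⟩
  rw [coordFun, dif_pos hw]
  exact (LinearEquiv.ofBijective (LinearMap.toSpanSingleton k _ (wgen I hI W f a))
      ⟨smul_left_injective k hw.1, fun x => (hw.2 x).imp fun c hc => hc.symm⟩).apply_symm_apply x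

lemma coordFun_w (hf : IsEpiP f) {a : P} (ha : a ∈ JsetF I hI W f) :
    coordFun I hI W f a (wgen I hI W f a) = 1 := by
  have h1 := coordFun_spec I hI W f hf ha (wgen I hI W f a)
  have h2 : (1 : k) • wgen I hI W f a = wgen I hI W f a := one_smul _ _
  exact smul_left_injective k ha (h1.trans h2.symm)

end Gen

section Comp

variable (J : Set P)

def zz (x y : P) : Prop := x ∈ J ∧ y ∈ J ∧ (x ≤ y ∨ y ≤ x)

lemma zz_symm : Symmetric (zz J) := fun _ _ h => ⟨h.2.1, h.1, h.2.2.symm⟩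

def compSetoid : Setoid ↥J where
  r x y := Relation.ReflTransGen (zz J) x y
  iseqv := ⟨fun _ => .refl,
    fun h => (@Relation.ReflTransGen.symmetric _ _ ⟨zz_symm J⟩).symm _ _ h,
    fun h1 h2 => h1.trans h2⟩

def Cset (q : Quotient (compSetoid J)) : Set P :=
  {a | ∃ h : a ∈ J, Quotient.mk (compSetoid J) ⟨a, h⟩ = q}

lemma Cset_sub (q : Quotient (compSetoid J)) : Cset J q ⊆ J := fun _ h => h.1

lemma zz_mk {a b : P} (h : zz J a b) :
    Quotient.mk (compSetoid J) ⟨a, h.1⟩ = Quotient.mk (compSetoid J) ⟨b, h.2.1⟩ :=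
  Quotient.sound (Relation.ReflTransGen.single h)

lemma mem_Cset_unique {a : P} {q : Quotient (compSetoid J)} (h : a ∈ Cset J q)
    (ha : a ∈ J) : Quotient.mk (compSetoid J) ⟨a, ha⟩ = q := h.2

lemma Cset_convex (hJ : IsConvexSet J) (q : Quotient (compSetoid J)) :
    IsConvexSet (Cset J q) := by
  rintro a b c ⟨ha, hq⟩ ⟨hc, hqc⟩ hab hbc
  have hb : b ∈ J := hJ ha hc hab hbc
  have hstep : Quotient.mk (compSetoid J) ⟨a, ha⟩ = Quotient.mk (compSetoid J) ⟨b, hb⟩ :=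
    zz_mk J ⟨ha, hb, Or.inl hab⟩
  exact ⟨hb, hstep.symm.trans hq⟩

lemma Cset_chain {a b : P} (hab : Relation.ReflTransGen (zz J) a b)
    {q : Quotient (compSetoid J)} (ha : a ∈ Cset J q) :
    b ∈ Cset J q ∧ Relation.ReflTransGen
      (fun x y => x ∈ Cset J q ∧ y ∈ Cset J q ∧ (x ≤ y ∨ y ≤ x)) a b := by
  induction hab with
  | refl => exact ⟨ha, .refl⟩
  | @tail c d h1 h2 ih =>
    obtain ⟨hc, hchain⟩ := ih
    have hd : d ∈ Cset J q := ⟨h2.2.1, (zz_mk J h2).symm.trans hc.2⟩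
    exact ⟨hd, hchain.tail ⟨hc, hd, h2.2.2⟩⟩

lemma Cset_connected (q : Quotient (compSetoid J)) : IsConnectedSet (Cset J q) := by
  constructor
  · obtain ⟨x, hx⟩ := Quotient.exists_rep q
    exact ⟨x.1, x.2, by rw [← hx]⟩
  · intro a ha b hb
    obtain ⟨haJ, hqa⟩ := ha
    obtain ⟨hbJ, hqb⟩ := hb
    have hr : Relation.ReflTransGen (zz J) a b :=
      Quotient.exact (hqa.trans hqb.symm)
    exact (Cset_chain J hr ⟨haJ, hqa⟩).2

lemma Cset_interval (hJ : IsConvexSet J) (q : Quotient (compSetoid J)) :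
    IsIntervalSet (Cset J q) :=
  ⟨Cset_convex J hJ q, Cset_connected J q⟩

end Comp

section CompMap

variable (W : PersMod k P)

noncomputable def compMap (S : Set P) (a : P) (c : W.V a →ₗ[k] k) :
    W.V a →ₗ[k] ↥(if a ∈ S then (⊤ : Submodule k k) else ⊥) where
  toFun x := ⟨if a ∈ S then c x else 0, by
    split_ifs with h; exacts [Submodule.mem_top, Submodule.zero_mem _]⟩
  map_add' x y := by apply Subtype.ext; by_cases h : a ∈ S <;> simp [h]
  map_smul' r x := by apply Subtype.ext; by_cases h : a ∈ S <;> simp [h]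

@[simp] lemma compMap_coe (S : Set P) (a : P) (c : W.V a →ₗ[k] k) (x : W.V a) :
    (compMap W S a c x).1 = if a ∈ S then c x else 0 := rfl

end CompMap

end QIMAux

/-- Over the incidence algebra of a finite poset (presented by an acyclic
quiver with full commutativity relations), every quotient module `W` of an interval module
`V_I` is interval decomposable. -/
theorem quotient_of_interval_module_is_interval_decomposable
    {k P : Type} [Field k] [PartialOrder P] [Fintype P]
    (I : Set P) (hI : IsIntervalSet I) (W : PersMod k P)
    (hW : ∃ f : PersHom (intervalMod I hI.1) W, IsEpiP f) :
    IntervalDecomposable W := by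
  classical
  obtain ⟨f, hf⟩ := hW
  have hJconv : IsConvexSet (QIMAux.JsetF I hI.1 W f) := QIMAux.JsetF_convex I hI.1 W f
  have hJI : QIMAux.JsetF I hI.1 W f ⊆ I := QIMAux.JsetF_sub I hI.1 W f
  letI : Fintype ↥(QIMAux.JsetF I hI.1 W f) := Fintype.ofFinite _
  letI : Fintype (Quotient (QIMAux.compSetoid (QIMAux.JsetF I hI.1 W f))) :=
    Quotient.fintype _
  refine ⟨Fintype.card (Quotient (QIMAux.compSetoid (QIMAux.JsetF I hI.1 W f))),
    fun i => QIMAux.Cset (QIMAux.JsetF I hI.1 W f) ((Fintype.equivFin _).symm i),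
    fun i => QIMAux.Cset_interval _ hJconv _,
    ⟨fun a => LinearMap.pi fun i => QIMAux.compMap W
      (QIMAux.Cset (QIMAux.JsetF I hI.1 W f) ((Fintype.equivFin _).symm i)) a
      (QIMAux.coordFun I hI.1 W f a), ?_⟩, ?_⟩
  · -- naturality
    intro a b hab
    refine LinearMap.ext fun x => funext fun i => ?_
    apply Subtype.ext
    show (intervalMap (QIMAux.Cset (QIMAux.JsetF I hI.1 W f) ((Fintype.equivFin _).symm i)) a b
        (QIMAux.compMap W (QIMAux.Cset (QIMAux.JsetF I hI.1 W f) ((Fintype.equivFin _).symm i)) a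
          (QIMAux.coordFun I hI.1 W f a) x)).1
      = (QIMAux.compMap W (QIMAux.Cset (QIMAux.JsetF I hI.1 W f) ((Fintype.equivFin _).symm i)) b
          (QIMAux.coordFun I hI.1 W f b) ((W.map hab) x)).1
    rw [intervalMap_coe, QIMAux.compMap_coe, QIMAux.compMap_coe]
    set S := QIMAux.Cset (QIMAux.JsetF I hI.1 W f) ((Fintype.equivFin _).symm i) with hS
    by_cases hb : b ∈ S
    · have hbJ : b ∈ QIMAux.JsetF I hI.1 W f := QIMAux.Cset_sub _ _ hb
      by_cases haS : a ∈ S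
      · have haJ : a ∈ QIMAux.JsetF I hI.1 W f := QIMAux.Cset_sub _ _ haS
        have haI : a ∈ I := hJI haJ
        rw [if_pos ⟨haS, hb⟩, if_pos haS, if_pos hb]
        have h1 : W.map hab x = QIMAux.coordFun I hI.1 W f a x • QIMAux.wgen I hI.1 W f b := by
          conv_lhs => rw [← QIMAux.coordFun_spec I hI.1 W f hf haJ x]
          rw [map_smul, QIMAux.wmap I hI.1 W f hab haI]
        rw [h1, map_smul, QIMAux.coordFun_w I hI.1 W f hf hbJ, smul_eq_mul, mul_one]
      · rw [if_neg (fun hc => haS hc.1), if_pos hb]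
        by_cases haJ : a ∈ QIMAux.JsetF I hI.1 W f
        · exfalso
          apply haS
          have hstep := QIMAux.zz_mk (QIMAux.JsetF I hI.1 W f) ⟨haJ, hbJ, Or.inl hab⟩
          exact ⟨haJ, hstep.trans (QIMAux.mem_Cset_unique _ hb hbJ)⟩
        · have hx0 : x = 0 := QIMAux.triv_outside I hI.1 W f hf haJ x
          rw [hx0, map_zero, map_zero]
    · rw [if_neg (fun hc => hb hc.2), if_neg hb]
  · -- isomorphism
    intro a
    by_cases haJ : a ∈ QIMAux.JsetF I hI.1 W f
    · have hmk : ∀ {i} (hi : a ∈ QIMAux.Cset (QIMAux.JsetF I hI.1 W f)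
          ((Fintype.equivFin _).symm i)),
          i = (Fintype.equivFin (Quotient (QIMAux.compSetoid (QIMAux.JsetF I hI.1 W f))))
            (Quotient.mk _ ⟨a, haJ⟩) := by
        intro i hi
        have h1 : Quotient.mk (QIMAux.compSetoid (QIMAux.JsetF I hI.1 W f)) ⟨a, haJ⟩
            = (Fintype.equivFin _).symm i := QIMAux.mem_Cset_unique _ hi haJ
        rw [h1, Equiv.apply_symm_apply]
      have hmem : a ∈ QIMAux.Cset (QIMAux.JsetF I hI.1 W f)
          ((Fintype.equivFin _).symm ((Fintype.equivFin _)
            (Quotient.mk (QIMAux.compSetoid (QIMAux.JsetF I hI.1 W f)) ⟨a, haJ⟩))) := by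
        refine ⟨haJ, ?_⟩
        rw [Equiv.symm_apply_apply]
      constructor
      · intro x y hxy
        have h1 := congrFun hxy ((Fintype.equivFin _)
          (Quotient.mk (QIMAux.compSetoid (QIMAux.JsetF I hI.1 W f)) ⟨a, haJ⟩))
        have h2 : (if a ∈ QIMAux.Cset (QIMAux.JsetF I hI.1 W f) ((Fintype.equivFin _).symm ((Fintype.equivFin _) (Quotient.mk (QIMAux.compSetoid (QIMAux.JsetF I hI.1 W f)) ⟨a, haJ⟩))) then QIMAux.coordFun I hI.1 W f a x else 0)
            = (if a ∈ QIMAux.Cset (QIMAux.JsetF I hI.1 W f) ((Fintype.equivFin _).symm ((Fintype.equivFin _) (Quotient.mk (QIMAux.compSetoid (QIMAux.JsetF I hI.1 W f)) ⟨a, haJ⟩))) then QIMAux.coordFun I hI.1 W f a y else 0) :=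
          congrArg Subtype.val h1
        rw [if_pos hmem, if_pos hmem] at h2
        rw [← QIMAux.coordFun_spec I hI.1 W f hf haJ x,
          ← QIMAux.coordFun_spec I hI.1 W f hf haJ y, h2]
      · intro y
        refine ⟨(y ((Fintype.equivFin _)
          (Quotient.mk (QIMAux.compSetoid (QIMAux.JsetF I hI.1 W f)) ⟨a, haJ⟩))).1
            • QIMAux.wgen I hI.1 W f a, ?_⟩
        funext i
        apply Subtype.ext
        show (QIMAux.compMap W _ a (QIMAux.coordFun I hI.1 W f a) _).1 = (y i).1
        rw [QIMAux.compMap_coe]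
        by_cases hi : a ∈ QIMAux.Cset (QIMAux.JsetF I hI.1 W f) ((Fintype.equivFin _).symm i)
        · have hieq : i = (Fintype.equivFin _)
              (Quotient.mk (QIMAux.compSetoid (QIMAux.JsetF I hI.1 W f)) ⟨a, haJ⟩) := hmk hi
          subst hieq
          rw [if_pos hi, map_smul, QIMAux.coordFun_w I hI.1 W f hf haJ, smul_eq_mul, mul_one]
        · rw [if_neg hi]
          exact (intervalMem_zero hi (y i)).symm
    · constructor
      · intro x y _
        rw [QIMAux.triv_outside I hI.1 W f hf haJ x, QIMAux.triv_outside I hI.1 W f hf haJ y]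
      · intro y
        refine ⟨0, ?_⟩
        funext i
        apply Subtype.ext
        have hi : a ∉ QIMAux.Cset (QIMAux.JsetF I hI.1 W f) ((Fintype.equivFin _).symm i) :=
          fun h => haJ (QIMAux.Cset_sub _ _ h)
        show (QIMAux.compMap W _ a (QIMAux.coordFun I hI.1 W f a) (0 : W.V a)).1 = (y i).1
        rw [QIMAux.compMap_coe, if_neg hi]
        exact (intervalMem_zero hi (y i)).symm
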